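/- Let a>0, α<0 and p∈[2,∞]. Let κ₁ be the unique positive solution of 2κ+α = −α·exp(−2κa). For λ>κ₁ define the operator R_λ on L^p(ℝ) by (R_λ u)(x) = (λ²−κ₁²)·∫_ℝ K(x,y;iλ)·u(y) dy. Then there exists a constant C>0, independent of λ, such that ‖R_λ u‖_{L^p} ≤ C·‖u‖_{L^p} for all λ>κ₁ and all u∈L^p(ℝ). -/

import Mathlib

open Complex MeasureTheory Filter Topology
open scoped ENNReal

set_option maxHeartbeats 1000000

noncomputable section

/-- `L1(x,y;k) = −α(2k+iα)·exp(ik|x+a|)·exp(ik|y+a|)`. -/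
def L1 (a α x y : ℝ) (k : ℂ) : ℂ :=
  -(α : ℂ) * (2 * k + I * α) * Complex.exp (I * k * (|x + a| : ℝ)) *
    Complex.exp (I * k * (|y + a| : ℝ))

/-- `L2(x,y;k) = iα²·exp(2ika)·exp(ik|x+a|)·exp(ik|y−a|)`. -/
def L2 (a α x y : ℝ) (k : ℂ) : ℂ :=
  I * (α : ℂ) ^ 2 * Complex.exp (2 * I * k * a) * Complex.exp (I * k * (|x + a| : ℝ)) *
    Complex.exp (I * k * (|y - a| : ℝ))

/-- `f(x,y;k) = L1 + L2 + L3 + L4`, with `L3(x,y;k)=L2(−x,−y;k)` and `L4(x,y;k)=L1(−x,−y;k)`. -/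
def fker (a α x y : ℝ) (k : ℂ) : ℂ :=
  L1 a α x y k + L2 a α x y k + L2 a α (-x) (-y) k + L1 a α (-x) (-y) k

/-- `D(k) = (2k+iα)² + α²·exp(4ika)`. -/
def Dden (a α : ℝ) (k : ℂ) : ℂ :=
  (2 * k + I * α) ^ 2 + (α : ℂ) ^ 2 * Complex.exp (4 * I * k * a)

/-- `U0(t;x,y) = (4πit)^{−1/2}·exp(i|x−y|²/(4t))`, principal branch. -/
def U0 (t x y : ℝ) : ℂ :=
  (4 * Real.pi * I * t : ℂ) ^ (-(1 / 2 : ℂ)) * Complex.exp (I * (|x - y| : ℝ) ^ 2 / (4 * t))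

/-- `K0(x,y;k) = (i/2k)·exp(ik|x−y|)`. -/
def K0 (x y : ℝ) (k : ℂ) : ℂ := I / (2 * k) * Complex.exp (I * k * (|x - y| : ℝ))

/-- The resolvent kernel `K(x,y;k) = K0(x,y;k) − (L1+L2+L3+L4)(x,y;k)/(2k·D(k))`. -/
def Kker (a α x y : ℝ) (k : ℂ) : ℂ :=
  K0 x y k - fker a α x y k / (2 * k * Dden a α k)


lemma norm_exp_aux (lam r : ℝ) :
    ‖Complex.exp (I * (I * (lam:ℂ)) * (r:ℂ))‖ = Real.exp (-(lam * r)) := by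
  rw [show I * (I*(lam:ℂ)) * (r:ℂ) = ((-(lam*r):ℝ):ℂ) by
    push_cast; linear_combination (lam*r:ℂ) * Complex.I_mul_I]
  rw [Complex.norm_exp, Complex.ofReal_re]

lemma norm_exp_aux2 (lam r : ℝ) :
    ‖Complex.exp (2 * I * (I * (lam:ℂ)) * (r:ℂ))‖ = Real.exp (-(2 * lam * r)) := by
  rw [show 2 * I * (I*(lam:ℂ)) * (r:ℂ) = ((-(2*lam*r):ℝ):ℂ) by
    push_cast; linear_combination (2*lam*r:ℂ) * Complex.I_mul_I]
  rw [Complex.norm_exp, Complex.ofReal_re]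

lemma normL1_le (a α lam x y : ℝ) (hlam : 0 < lam) (hA : 0 ≤ 2*lam + α) :
    ‖L1 a α x y (I * lam)‖ ≤ |α| * (2*lam+α) * Real.exp (-(lam * |x - y|)) := by
  have h2 : (2*(I*(lam:ℂ)) + I*(α:ℂ)) = ((2*lam+α:ℝ):ℂ) * I := by push_cast; ring
  have hxy : |x - y| ≤ |x + a| + |y + a| := by
    calc |x - y| = |(x+a) - (y+a)| := by congr 1; ring
    _ ≤ _ := abs_sub _ _
  unfold L1
  rw [norm_mul, norm_mul, norm_mul, norm_neg, Complex.norm_real, h2, norm_mul,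
    Complex.norm_I, Complex.norm_real, mul_one, norm_exp_aux, norm_exp_aux,
    Real.norm_eq_abs, Real.norm_eq_abs, _root_.abs_of_nonneg hA,
    mul_assoc (|α| * (2*lam+α)), ← Real.exp_add]
  have : Real.exp (-(lam*|x+a|) + -(lam*|y+a|)) ≤ Real.exp (-(lam*|x-y|)) :=
    Real.exp_le_exp.mpr (by nlinarith)
  exact mul_le_mul_of_nonneg_left this (mul_nonneg (abs_nonneg α) hA)

lemma normL2_le (a α lam x y : ℝ) (ha : 0 < a) (hlam : 0 < lam) :
    ‖L2 a α x y (I * lam)‖ ≤ α^2 * Real.exp (-(lam * |x - y|)) := by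
  have hxy : |x - y| ≤ 2*a + |x + a| + |y - a| := by
    rw [abs_le]
    constructor <;> nlinarith [le_abs_self (x+a), neg_abs_le (x+a), le_abs_self (y-a),
      neg_abs_le (y-a)]
  unfold L2
  rw [norm_mul, norm_mul, norm_mul, norm_mul, Complex.norm_I, one_mul, norm_pow,
    Complex.norm_real, norm_exp_aux2, norm_exp_aux, norm_exp_aux, Real.norm_eq_abs, _root_.sq_abs,
    mul_assoc (α^2), ← Real.exp_add, mul_assoc (α^2), ← Real.exp_add]
  have : Real.exp (-(2*lam*a) + -(lam*|x+a|) + -(lam*|y-a|)) ≤ Real.exp (-(lam*|x-y|)) :=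
    Real.exp_le_exp.mpr (by nlinarith)
  exact mul_le_mul_of_nonneg_left this (sq_nonneg α)

lemma D_eq (a α lam : ℝ) :
    Dden a α (I * lam) = ((α^2 * Real.exp (-(4*lam*a)) - (2*lam+α)^2 : ℝ) : ℂ) := by
  unfold Dden
  rw [show (4:ℂ)*I*(I*(lam:ℂ))*(a:ℂ) = ((-(4*lam*a):ℝ):ℂ) by
    push_cast; linear_combination (4*lam*a:ℂ) * Complex.I_mul_I, ← Complex.ofReal_exp]
  push_cast
  linear_combination ((2*(lam:ℂ)+α)^2) * Complex.I_mul_I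

lemma Dlow (a α κ₁ lam : ℝ) (ha : 0 < a) (hα : α < 0) (hκ₁ : 0 < κ₁)
    (hκeq : 2 * κ₁ + α = -α * Real.exp (-2 * κ₁ * a)) (hl : κ₁ < lam) :
    2*(lam-κ₁)*(2*κ₁+α) ≤ (2*lam+α)^2 - α^2 * Real.exp (-(4*lam*a)) := by
  have hl0 : 0 < lam := hκ₁.trans hl
  have hc0 : 0 < 2*κ₁+α := by
    rw [hκeq]; have := Real.exp_pos (-2*κ₁*a); nlinarith
  have hB : 0 < -α * Real.exp (-(2*lam*a)) := by
    have := Real.exp_pos (-(2*lam*a)); nlinarith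
  have hE : Real.exp (-(2*lam*a)) ≤ Real.exp (-2*κ₁*a) :=
    Real.exp_le_exp.mpr (by nlinarith)
  have hmul : α * Real.exp (-2*κ₁*a) ≤ α * Real.exp (-(2*lam*a)) :=
    mul_le_mul_of_nonpos_left hE hα.le
  have hAB : 2*(lam-κ₁) ≤ 2*lam + α - (-α * Real.exp (-(2*lam*a))) := by nlinarith
  have hsum : 2*κ₁+α ≤ 2*lam + α + (-α * Real.exp (-(2*lam*a))) := by nlinarith
  have hsq : α^2 * Real.exp (-(4*lam*a)) = (-α * Real.exp (-(2*lam*a)))^2 := by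
    rw [mul_pow, neg_sq, sq (Real.exp _), ← Real.exp_add]; ring_nf
  have h0 : (0:ℝ) ≤ 2*(lam-κ₁) := by nlinarith
  have := mul_le_mul hAB hsum hc0.le (h0.trans hAB)
  nlinarith [this]

lemma kernel_bound (a α : ℝ) (ha : 0 < a) (hα : α < 0) (κ₁ : ℝ) (hκ₁ : 0 < κ₁)
    (hκeq : 2 * κ₁ + α = -α * Real.exp (-2 * κ₁ * a)) :
    ∃ C > 0, ∀ lam : ℝ, κ₁ < lam → ∀ x y : ℝ,
      ‖(((lam:ℂ)^2 - (κ₁:ℂ)^2) * Kker a α x y (I * lam))‖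
        ≤ C * lam * Real.exp (-(lam * |x - y|)) := by
  have hc0 : 0 < 2*κ₁+α := by
    rw [hκeq]; have := Real.exp_pos (-2*κ₁*a); nlinarith
  obtain ⟨C₂, hC₂def⟩ : ∃ c : ℝ, c = (2 * |α| * κ₁ + α^2) / (κ₁ * (2*κ₁+α)) := ⟨_, rfl⟩
  have hC₂0 : 0 ≤ C₂ := by
    rw [hC₂def]; apply div_nonneg (by positivity) (by positivity)
  refine ⟨1 + C₂, by positivity, fun lam hl x y => ?_⟩
  have hl0 : 0 < lam := hκ₁.trans hl
  have hA : 0 < 2*lam + α := by nlinarith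
  set r : ℝ := |x - y| with hrdef
  have hr : 0 ≤ r := abs_nonneg _
  have hEpos : 0 < Real.exp (-(lam * r)) := Real.exp_pos _
  -- norm of the prefactor
  have hnormc : ‖((lam:ℂ)^2 - (κ₁:ℂ)^2)‖ = lam^2 - κ₁^2 := by
    rw [show ((lam:ℂ)^2 - (κ₁:ℂ)^2) = ((lam^2-κ₁^2:ℝ):ℂ) by push_cast; ring,
      Complex.norm_real, Real.norm_eq_abs, _root_.abs_of_nonneg (by nlinarith)]
  -- norm of K0
  have hK0 : ‖K0 x y (I * lam)‖ = (2*lam)⁻¹ * Real.exp (-(lam * r)) := by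
    unfold K0
    rw [norm_mul, norm_div, Complex.norm_I, norm_exp_aux]
    congr 1
    rw [show (2*(I*(lam:ℂ))) = ((2*lam:ℝ):ℂ) * I by push_cast; ring, norm_mul,
      Complex.norm_I, Complex.norm_real, mul_one, Real.norm_eq_abs,
      _root_.abs_of_nonneg (by positivity : (0:ℝ) ≤ 2*lam), one_div]
  -- norm of fker
  have hfk : ‖fker a α x y (I * lam)‖ ≤ (4 * |α| * lam + 2*α^2) * Real.exp (-(lam * r)) := by
    have hb1 := normL1_le a α lam x y hl0 hA.le
    have hb2 := normL2_le a α lam x y ha hl0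
    have hb3 := normL2_le a α lam (-x) (-y) ha hl0
    have hb4 := normL1_le a α lam (-x) (-y) hl0 hA.le
    have hneg : |(-x) - (-y)| = |x - y| := by
      rw [show (-x) - (-y) = -(x-y) by ring, abs_neg]
    rw [hneg] at hb3 hb4
    have h1 : ‖fker a α x y (I * lam)‖ ≤ ‖L1 a α x y (I*lam)‖ + ‖L2 a α x y (I*lam)‖
        + ‖L2 a α (-x) (-y) (I*lam)‖ + ‖L1 a α (-x) (-y) (I*lam)‖ := by
      unfold fker
      calc ‖_ + _ + _ + _‖ ≤ _ := norm_add_le _ _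
      _ ≤ _ := by
        gcongr
        calc ‖_ + _ + _‖ ≤ _ := norm_add_le _ _
        _ ≤ _ := by gcongr; exact norm_add_le _ _
    have habs : |α| * (2*lam+α) ≤ 2 * |α| * lam := by nlinarith [abs_nonneg α, neg_abs_le α]
    nlinarith [hEpos, abs_nonneg α]
  -- norm of denominator
  have hDlow := Dlow a α κ₁ lam ha hα hκ₁ hκeq hl
  have hden : 4*lam*(lam-κ₁)*(2*κ₁+α) ≤ ‖2*(I*(lam:ℂ)) * Dden a α (I*lam)‖ := by
    rw [norm_mul, D_eq, Complex.norm_real,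
      show (2*(I*(lam:ℂ))) = ((2*lam:ℝ):ℂ) * I by push_cast; ring, norm_mul,
      Complex.norm_I, Complex.norm_real, mul_one, Real.norm_eq_abs, Real.norm_eq_abs,
      _root_.abs_of_nonneg (by positivity : (0:ℝ) ≤ 2*lam)]
    have h1 : (2*lam+α)^2 - α^2 * Real.exp (-(4*lam*a))
        ≤ |α^2 * Real.exp (-(4*lam*a)) - (2*lam+α)^2| := by
      rw [abs_sub_comm]; exact le_abs_self _
    nlinarith [hDlow]
  have hdenpos : 0 < ‖2*(I*(lam:ℂ)) * Dden a α (I*lam)‖ := by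
    have : 0 < 4*lam*(lam-κ₁)*(2*κ₁+α) := by
      apply mul_pos (mul_pos (by positivity) (by linarith)) hc0
    linarith
  -- the core polynomial inequality
  have hid : C₂ * (κ₁ * (2*κ₁+α)) = 2 * |α| * κ₁ + α^2 := by
    rw [hC₂def]; exact div_mul_cancel₀ _ (by positivity)
  have key : κ₁ * ((lam+κ₁) * (4 * |α| * lam + 2*α^2)) ≤ 4*lam^2*(2 * |α| * κ₁ + α^2) := by
    nlinarith [mul_nonneg (mul_nonneg (abs_nonneg α) hκ₁.le) (mul_nonneg hl0.le (sub_nonneg.2 hl.le)),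
      mul_nonneg (sq_nonneg α) (mul_nonneg hl0.le (sub_nonneg.2 hl.le)),
      mul_nonneg (sq_nonneg α) (mul_nonneg (sub_nonneg.2 hl.le) (add_nonneg hl0.le hκ₁.le))]
  have core : (lam^2 - κ₁^2) * (4 * |α| * lam + 2*α^2) ≤ C₂ * lam * (4*lam*(lam-κ₁)*(2*κ₁+α)) := by
    rw [← mul_le_mul_iff_right₀ hκ₁]
    calc κ₁ * ((lam^2 - κ₁^2) * (4 * |α| * lam + 2*α^2))
        = (lam-κ₁) * (κ₁ * ((lam+κ₁) * (4 * |α| * lam + 2*α^2))) := by ring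
    _ ≤ (lam-κ₁) * (4*lam^2*(2 * |α| * κ₁ + α^2)) :=
        mul_le_mul_of_nonneg_left key (by linarith)
    _ = κ₁ * (C₂ * lam * (4*lam*(lam-κ₁)*(2*κ₁+α))) := by rw [← hid]; ring
  -- assemble
  have hsplit : ((lam:ℂ)^2 - (κ₁:ℂ)^2) * Kker a α x y (I * lam)
      = ((lam:ℂ)^2 - (κ₁:ℂ)^2) * K0 x y (I*lam)
        - ((lam:ℂ)^2 - (κ₁:ℂ)^2) * (fker a α x y (I*lam) / (2*(I*(lam:ℂ)) * Dden a α (I*lam))) := by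
    rw [Kker]; ring
  rw [hsplit]
  calc ‖_ - _‖ ≤ ‖((lam:ℂ)^2 - (κ₁:ℂ)^2) * K0 x y (I*lam)‖
      + ‖((lam:ℂ)^2 - (κ₁:ℂ)^2) * (fker a α x y (I*lam) / (2*(I*(lam:ℂ)) * Dden a α (I*lam)))‖ :=
        norm_sub_le _ _
  _ ≤ 1 * lam * Real.exp (-(lam * r)) + C₂ * lam * Real.exp (-(lam * r)) := by
      gcongr ?_ + ?_
      · rw [norm_mul, hnormc, hK0, one_mul, ← mul_assoc, ← div_eq_mul_inv]
        rw [div_mul_eq_mul_div, div_le_iff₀ (by positivity : (0:ℝ) < 2*lam)]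
        calc (lam^2 - κ₁^2) * Real.exp (-(lam * r)) ≤ (2*lam^2) * Real.exp (-(lam * r)) :=
              mul_le_mul_of_nonneg_right (by nlinarith [sq_nonneg κ₁]) hEpos.le
        _ = lam * Real.exp (-(lam * r)) * (2*lam) := by ring
      · rw [norm_mul, norm_div, hnormc, ← mul_div_assoc, div_le_iff₀ hdenpos]
        calc (lam^2 - κ₁^2) * ‖fker a α x y (I*lam)‖
            ≤ (lam^2 - κ₁^2) * ((4 * |α| * lam + 2*α^2) * Real.exp (-(lam * r))) := by
              apply mul_le_mul_of_nonneg_left hfk (by nlinarith)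
        _ = ((lam^2 - κ₁^2) * (4 * |α| * lam + 2*α^2)) * Real.exp (-(lam * r)) := by ring
        _ ≤ (C₂ * lam * (4*lam*(lam-κ₁)*(2*κ₁+α))) * Real.exp (-(lam * r)) :=
              mul_le_mul_of_nonneg_right core hEpos.le
        _ = (C₂ * lam * Real.exp (-(lam * r))) * (4*lam*(lam-κ₁)*(2*κ₁+α)) := by ring
        _ ≤ (C₂ * lam * Real.exp (-(lam * r))) * ‖2*(I*(lam:ℂ)) * Dden a α (I*lam)‖ := by
              apply mul_le_mul_of_nonneg_left hden (by positivity)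
  _ = (1 + C₂) * lam * Real.exp (-(lam * r)) := by ring


lemma schur_bound (C lam : ℝ) (hC : 0 < C) (hlam : 0 < lam) (p : ℝ≥0∞) (hp : 2 ≤ p)
    (Kf : ℝ → ℝ → ℂ)
    (hK : ∀ x y : ℝ, ‖Kf x y‖ ≤ C * lam * Real.exp (-(lam * |x - y|)))
    (u : ℝ → ℂ) (hu : MemLp u p volume) :
    eLpNorm (fun x : ℝ => ∫ y : ℝ, Kf x y * u y) p volume
      ≤ ENNReal.ofReal (2 * C) * eLpNorm u p volume := by
  obtain ⟨v, hv, huv⟩ : ∃ v, StronglyMeasurable v ∧ u =ᵐ[volume] v :=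
    ⟨hu.1.mk u, hu.1.stronglyMeasurable_mk, hu.1.ae_eq_mk⟩
  set f : ℝ → ℝ≥0∞ := fun y => (‖v y‖₊ : ℝ≥0∞) with hfdef
  have hf : Measurable f := hv.measurable.enorm
  set g : ℝ → ℝ≥0∞ := fun t => ENNReal.ofReal (C * lam * Real.exp (-(lam * |t|))) with hgdef
  have hgm : Measurable g := by
    have : Continuous fun t : ℝ => C * lam * Real.exp (-(lam * |t|)) :=
      continuous_const.mul (Real.continuous_exp.comp ((continuous_const.mul _root_.continuous_abs).neg))
    exact this.measurable.ennreal_ofReal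
  have hg0 : ∀ t, g t ≠ 0 := fun t => (ENNReal.ofReal_pos.mpr (by positivity)).ne'
  have hgtop : ∀ t, g t ≠ ∞ := fun t => ENNReal.ofReal_ne_top
  set M : ℝ≥0∞ := ENNReal.ofReal (2 * C) with hMdef
  have hM0 : M ≠ 0 := (ENNReal.ofReal_pos.mpr (by positivity)).ne'
  have hMtop : M ≠ ⊤ := ENNReal.ofReal_ne_top
  -- the integral of g
  have hIoi : IntegrableOn (fun t : ℝ => Real.exp (-(lam * |t|))) (Set.Ioi 0) := by
    apply (exp_neg_integrableOn_Ioi 0 hlam).congr_fun ?_ measurableSet_Ioi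
    intro t ht
    simp only [Set.mem_Ioi] at ht
    simp [abs_of_pos ht, neg_mul]
  have hIic : IntegrableOn (fun t : ℝ => Real.exp (-(lam * |t|))) (Set.Iic 0) := by
    rw [← Measure.map_neg_eq_self (volume : Measure ℝ)]
    have m : MeasurableEmbedding fun x : ℝ => -x := (Homeomorph.neg ℝ).measurableEmbedding
    rw [m.integrableOn_map_iff]
    simp_rw [Function.comp_def, abs_neg, Set.neg_preimage, Set.neg_Iic, neg_zero]
    exact Iff.mpr integrableOn_Ici_iff_integrableOn_Ioi hIoi
  have hint : Integrable (fun t : ℝ => Real.exp (-(lam * |t|))) := by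
    rw [← integrableOn_univ, ← Set.Iic_union_Ioi (a := (0:ℝ))]
    exact hIic.union hIoi
  have hvalIoi : ∫ t in Set.Ioi (0:ℝ), Real.exp (-lam * t) = lam⁻¹ := by
    have := integral_exp_neg_mul_rpow (p := 1) one_pos hlam
    have h2 : Real.Gamma (1/1 + 1) = 1 := by norm_num [Real.Gamma_two]
    rw [h2] at this
    simpa [Real.rpow_one, Real.rpow_neg_one] using this
  have hval : ∫ t : ℝ, Real.exp (-(lam * |t|)) = 2 * lam⁻¹ := by
    have h := integral_comp_abs (f := fun s : ℝ => Real.exp (-(lam * s)))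
    simp only [neg_mul] at h hvalIoi ⊢
    rw [h, hvalIoi]
  have hgint : ∫⁻ t, g t ≤ M := by
    have h1 : ∫⁻ t, g t = ENNReal.ofReal (∫ t : ℝ, C * lam * Real.exp (-(lam * |t|))) :=
      (ofReal_integral_eq_lintegral_ofReal (hint.const_mul _)
        (Filter.Eventually.of_forall fun t => by positivity)).symm
    rw [h1, MeasureTheory.integral_const_mul, hval, hMdef]
    apply ENNReal.ofReal_le_ofReal
    have : C * lam * (2 * lam⁻¹) = 2 * C := by field_simp
    rw [this]
  have hrow : ∀ x : ℝ, ∫⁻ y, g (x - y) = ∫⁻ t, g t := fun x =>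
    (Measure.measurePreserving_sub_left volume x).lintegral_comp hgm
  have hcol : ∀ y : ℝ, ∫⁻ x, g (x - y) = ∫⁻ t, g t := fun y =>
    (measurePreserving_sub_right volume y).lintegral_comp hgm
  have hKg : ∀ x y : ℝ, (‖Kf x y‖₊ : ℝ≥0∞) ≤ g (x - y) := fun x y => by
    rw [← enorm_eq_nnnorm, ← ofReal_norm]
    exact ENNReal.ofReal_le_ofReal (hK x y)
  have hpt : ∀ x : ℝ, (‖∫ y : ℝ, Kf x y * u y‖₊ : ℝ≥0∞) ≤ ∫⁻ y, g (x - y) * f y := by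
    intro x
    calc (‖∫ y : ℝ, Kf x y * u y‖₊ : ℝ≥0∞) ≤ ∫⁻ y, (‖Kf x y * u y‖₊ : ℝ≥0∞) :=
          enorm_integral_le_lintegral_enorm _
    _ = ∫⁻ y, (‖Kf x y * v y‖₊ : ℝ≥0∞) := lintegral_congr_ae (huv.mono fun y hy => by dsimp only; rw [hy])
    _ ≤ ∫⁻ y, g (x - y) * f y := by
          apply lintegral_mono
          intro y
          dsimp only
          rw [show (‖Kf x y * v y‖₊ : ℝ≥0∞) = (‖Kf x y‖₊ : ℝ≥0∞) * (‖v y‖₊ : ℝ≥0∞) by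
            simp [nnnorm_mul]]
          exact mul_le_mul_left (hKg x y) _
  have heq_u : eLpNorm u p volume = eLpNorm v p volume := eLpNorm_congr_ae huv
  by_cases hptop : p = ∞
  · subst hptop
    rw [heq_u]
    have hN : ∀ᵐ y : ℝ ∂volume, f y ≤ eLpNorm v ⊤ volume := by
      rw [eLpNorm_exponent_top, eLpNormEssSup]
      exact ae_le_essSup
    have hTx : ∀ x : ℝ, (∫⁻ y, g (x - y) * f y) ≤ M * eLpNorm v ⊤ volume := by
      intro x
      calc ∫⁻ y, g (x - y) * f y ≤ ∫⁻ y, g (x - y) * eLpNorm v ⊤ volume :=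
            lintegral_mono_ae (hN.mono fun y hy => mul_le_mul_right hy _)
      _ = (∫⁻ y, g (x - y)) * eLpNorm v ⊤ volume :=
            lintegral_mul_const _ (hgm.comp (measurable_const.sub measurable_id))
      _ ≤ M * eLpNorm v ⊤ volume := by
            apply mul_le_mul_left
            rw [hrow x]; exact hgint
    rw [eLpNorm_exponent_top, eLpNormEssSup]
    refine essSup_le_of_ae_le _ (Filter.Eventually.of_forall fun x => ?_)
    exact le_trans (hpt x) (hTx x)
  · have hp0 : p ≠ 0 := by
      intro h; rw [h] at hp; exact absurd hp (by simp)
    have hpr2 : (2:ℝ) ≤ p.toReal := by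
      have := ENNReal.toReal_mono hptop hp
      simpa using this
    set pr := p.toReal with hprdef
    have hpr1 : 1 < pr := by linarith
    have hprpos : 0 < pr := by linarith
    set q := pr / (pr - 1) with hqdef
    have hpq : q.HolderConjugate pr := (Real.HolderConjugate.conjExponent hpr1).symm
    have hq1 : 1 < q := hpq.lt
    have hqpos : 0 < q := by linarith
    have hinv : 1/q + 1/pr = 1 := by
      have := hpq.inv_add_inv_eq_one
      simpa [one_div] using this
    have hgsplit : ∀ x y : ℝ, g (x - y) * f y
        = (g (x - y) ^ (1/q)) * ((g (x - y) ^ (1/pr)) * f y) := by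
      intro x y
      rw [← mul_assoc, ← ENNReal.rpow_add _ _ (hg0 _) (hgtop _), hinv, ENNReal.rpow_one]
    have hgx : ∀ x : ℝ, Measurable fun y : ℝ => g (x - y) := fun x =>
      hgm.comp (measurable_const.sub measurable_id)
    have hT : ∀ x : ℝ, (∫⁻ y, g (x - y) * f y)
        ≤ M ^ (1/q) * (∫⁻ y, g (x - y) * f y ^ pr) ^ (1/pr) := by
      intro x
      calc (∫⁻ y, g (x - y) * f y)
          = ∫⁻ y, ((fun y => g (x - y) ^ (1/q)) * fun y => (g (x - y) ^ (1/pr)) * f y) y := by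
            apply lintegral_congr; intro y
            simp only [Pi.mul_apply]
            exact hgsplit x y
      _ ≤ (∫⁻ y, (g (x - y) ^ (1/q)) ^ q) ^ (1/q)
            * (∫⁻ y, ((g (x - y) ^ (1/pr)) * f y) ^ pr) ^ (1/pr) :=
            ENNReal.lintegral_mul_le_Lp_mul_Lq volume hpq
              ((hgx x).pow_const _).aemeasurable
              (((hgx x).pow_const _).mul hf).aemeasurable
      _ = (∫⁻ y, g (x - y)) ^ (1/q) * (∫⁻ y, g (x - y) * f y ^ pr) ^ (1/pr) := by
            congr 1
            · congr 1
              apply lintegral_congr; intro y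
              rw [← ENNReal.rpow_mul, one_div, inv_mul_cancel₀ hqpos.ne', ENNReal.rpow_one]
            · congr 1
              apply lintegral_congr; intro y
              rw [ENNReal.mul_rpow_of_nonneg _ _ hprpos.le, ← ENNReal.rpow_mul, one_div,
                inv_mul_cancel₀ hprpos.ne', ENNReal.rpow_one]
      _ ≤ M ^ (1/q) * (∫⁻ y, g (x - y) * f y ^ pr) ^ (1/pr) := by
            apply mul_le_mul_left
            apply ENNReal.rpow_le_rpow _ (by positivity)
            rw [hrow x]; exact hgint
    have hSint : (∫⁻ x, ∫⁻ y, g (x - y) * f y ^ pr) ≤ M * ∫⁻ y, f y ^ pr := by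
      rw [lintegral_lintegral_swap
        (((hgm.comp (measurable_fst.sub measurable_snd)).mul
          ((hf.comp measurable_snd).pow_const pr)).aemeasurable)]
      calc ∫⁻ y, ∫⁻ x, g (x - y) * f y ^ pr
          = ∫⁻ y, (∫⁻ x, g (x - y)) * f y ^ pr := by
            apply lintegral_congr; intro y
            exact lintegral_mul_const _ (hgm.comp (measurable_id.sub measurable_const))
      _ ≤ ∫⁻ y, M * f y ^ pr := by
            apply lintegral_mono; intro y
            apply mul_le_mul_left
            rw [hcol y]; exact hgint
      _ = M * ∫⁻ y, f y ^ pr := lintegral_const_mul M (hf.pow_const pr)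
    have hexpq : pr / q = pr - 1 := by
      rw [hqdef, div_div_eq_mul_div, mul_comm, mul_div_assoc, div_self hprpos.ne', mul_one]
    have hexp : pr/q + 1 = pr := by rw [hexpq]; ring
    have step : (∫⁻ x, (‖∫ y : ℝ, Kf x y * u y‖₊ : ℝ≥0∞) ^ pr) ≤ M ^ pr * ∫⁻ y, f y ^ pr := by
      calc (∫⁻ x, (‖∫ y : ℝ, Kf x y * u y‖₊ : ℝ≥0∞) ^ pr)
          ≤ ∫⁻ x, (M ^ (1/q) * (∫⁻ y, g (x - y) * f y ^ pr) ^ (1/pr)) ^ pr := by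
            apply lintegral_mono; intro x
            exact ENNReal.rpow_le_rpow ((hpt x).trans (hT x)) hprpos.le
      _ = ∫⁻ x, M ^ (pr/q) * ∫⁻ y, g (x - y) * f y ^ pr := by
            apply lintegral_congr; intro x
            rw [ENNReal.mul_rpow_of_nonneg _ _ hprpos.le, ← ENNReal.rpow_mul,
              ← ENNReal.rpow_mul]
            simp only [one_div]
            rw [inv_mul_cancel₀ hprpos.ne', ENNReal.rpow_one,
              show q⁻¹ * pr = pr/q by rw [div_eq_mul_inv]; ring]
      _ = M ^ (pr/q) * ∫⁻ x, ∫⁻ y, g (x - y) * f y ^ pr :=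
            lintegral_const_mul' _ _ (ENNReal.rpow_ne_top_of_nonneg (by positivity) hMtop)
      _ ≤ M ^ (pr/q) * (M * ∫⁻ y, f y ^ pr) := mul_le_mul_right hSint _
      _ = M ^ pr * ∫⁻ y, f y ^ pr := by
            rw [← mul_assoc]
            congr 1
            calc M ^ (pr/q) * M = M ^ (pr/q) * M ^ (1:ℝ) := by rw [ENNReal.rpow_one]
            _ = M ^ (pr/q + 1) := (ENNReal.rpow_add _ _ hM0 hMtop).symm
            _ = M ^ pr := by rw [hexp]
    rw [eLpNorm_eq_lintegral_rpow_enorm_toReal hp0 hptop, heq_u,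
      eLpNorm_eq_lintegral_rpow_enorm_toReal hp0 hptop]
    calc (∫⁻ x, (‖∫ y : ℝ, Kf x y * u y‖₊ : ℝ≥0∞) ^ p.toReal) ^ (1/p.toReal)
        ≤ (M ^ pr * ∫⁻ y, f y ^ pr) ^ (1/pr) := ENNReal.rpow_le_rpow step (by positivity)
    _ = M * (∫⁻ y, f y ^ pr) ^ (1/pr) := by
        rw [ENNReal.mul_rpow_of_nonneg _ _ (by positivity), ← ENNReal.rpow_mul,
          mul_one_div, div_self hprpos.ne', ENNReal.rpow_one]
    _ = M * (∫⁻ x, (‖v x‖₊ : ℝ≥0∞) ^ p.toReal) ^ (1/p.toReal) := rfl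

/-- for `a>0`, `α<0` and `p∈[2,∞]`, with `κ₁` the unique positive solution of
`2κ+α = −α·e^{−2κa}`, the operators `(R_λ u)(x) = (λ²−κ₁²)·∫ K(x,y;iλ)u(y)dy` are bounded
on `L^p(ℝ)` uniformly in `λ>κ₁`. -/
theorem stmt13 (a α : ℝ) (ha : 0 < a) (hα : α < 0) (p : ℝ≥0∞) (hp : 2 ≤ p)
    (κ₁ : ℝ) (hκ₁ : 0 < κ₁) (hκeq : 2 * κ₁ + α = -α * Real.exp (-2 * κ₁ * a)) :
    ∃ C > 0, ∀ lam : ℝ, κ₁ < lam → ∀ u : ℝ → ℂ, MemLp u p volume →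
      eLpNorm (fun x : ℝ =>
          ((lam : ℂ) ^ 2 - (κ₁ : ℂ) ^ 2) * ∫ y : ℝ, Kker a α x y (I * lam) * u y) p volume
        ≤ ENNReal.ofReal C * eLpNorm u p volume := by
  obtain ⟨C, hC, hbound⟩ := kernel_bound a α ha hα κ₁ hκ₁ hκeq
  refine ⟨2 * C, by positivity, fun lam hl u hu => ?_⟩
  have hlam0 : 0 < lam := hκ₁.trans hl
  have hmain := schur_bound C lam hC hlam0 p hp
    (fun x y => ((lam : ℂ) ^ 2 - (κ₁ : ℂ) ^ 2) * Kker a α x y (I * lam))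
    (hbound lam hl) u hu
  have hfun : (fun x : ℝ => ((lam : ℂ) ^ 2 - (κ₁ : ℂ) ^ 2) * ∫ y : ℝ, Kker a α x y (I * lam) * u y)
      = fun x : ℝ => ∫ y : ℝ, (((lam : ℂ) ^ 2 - (κ₁ : ℂ) ^ 2) * Kker a α x y (I * lam)) * u y := by
    funext x
    rw [← MeasureTheory.integral_const_mul]
    congr 1
    funext y
    ring
  rw [hfun]
  exact hmain
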